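/- Let j be a positive integer, m ≥ 0 a real number, and set P = j(j+1)/2. Define σ(i) = m/j for 1 ≤ i ≤ j and p(i) = i for 1 ≤ i ≤ j. Then σ is nonnegative and antitone on {1,…,j} with ∑_{i=1}^j σ(i) = m; p satisfies p(i) ≤ i and ∑_{i=1}^j p(i) = P; and ∑_{i=1}^j σ(i)·p(i) = m(j+1)/2 ≥ (m/2)·√(2P). Hence the upper bound of order m·√P on ∑ σ(i)·p(i) is attained up to a constant factor. -/

import Mathlib

/-- Tightness of the `O(m√P)` bound: with `P = j(j+1)/2`, `σ i = m/j` and `p i = i` on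
`{1,…,j}`, the sequence `σ` is nonnegative antitone with sum `m`, `p` satisfies `p i ≤ i`
with sum `P`, while `∑ σ i * p i = m(j+1)/2 ≥ (m/2)·√(2P)`. -/
theorem tightness_example (j : ℕ) (hj : 0 < j) (m : ℝ) (hm : 0 ≤ m) (P : ℕ)
    (hPdef : P = j * (j + 1) / 2)
    (σ : ℕ → ℝ) (hσdef : ∀ i ∈ Finset.Icc 1 j, σ i = m / j)
    (p : ℕ → ℕ) (hpdef : ∀ i ∈ Finset.Icc 1 j, p i = i) :
    (∀ i ∈ Finset.Icc 1 j, 0 ≤ σ i) ∧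
    (∀ i i', 1 ≤ i → i ≤ i' → i' ≤ j → σ i' ≤ σ i) ∧
    (∑ i ∈ Finset.Icc 1 j, σ i = m) ∧
    (∀ i ∈ Finset.Icc 1 j, p i ≤ i) ∧
    (∑ i ∈ Finset.Icc 1 j, p i = P) ∧
    (∑ i ∈ Finset.Icc 1 j, σ i * p i = m * (j + 1) / 2) ∧
    m * (j + 1) / 2 ≥ (m / 2) * Real.sqrt (2 * P) := by
  have hj0 : (0:ℝ) < j := by exact_mod_cast hj
  have hsum : ∑ i ∈ Finset.Icc 1 j, i = j * (j + 1) / 2 := by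
    have := Finset.sum_range_id_mul_two (j+1)
    have hins : Finset.range (j+1) = insert 0 (Finset.Icc 1 j) := by
      ext x; simp [Nat.lt_succ_iff]; omega
    have h : ∑ i ∈ Finset.range (j+1), i = ∑ i ∈ Finset.Icc 1 j, i := by
      rw [hins, Finset.sum_insert (by simp)]; simp
    rw [h] at this
    have h3 : (∑ i ∈ Finset.Icc 1 j, i) * 2 = j * (j + 1) := by rw [this, Nat.add_sub_cancel, Nat.mul_comm]
    omega
  refine ⟨?_, ?_, ?_, ?_, ?_, ?_, ?_⟩
  · intro i hi; rw [hσdef i hi]; positivity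
  · intro i i' h1 h2 h3
    rw [hσdef i (Finset.mem_Icc.mpr ⟨h1, le_trans h2 h3⟩),
        hσdef i' (Finset.mem_Icc.mpr ⟨le_trans h1 h2, h3⟩)]
  · rw [Finset.sum_congr rfl hσdef]
    rw [Finset.sum_const, Nat.card_Icc]
    simp
    field_simp
  · intro i hi; rw [hpdef i hi]
  · rw [Finset.sum_congr rfl hpdef, hPdef]
    exact hsum
  · have : ∑ i ∈ Finset.Icc 1 j, σ i * p i = ∑ i ∈ Finset.Icc 1 j, (m / j) * i := by
      apply Finset.sum_congr rfl
      intro i hi; rw [hσdef i hi, hpdef i hi]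
    rw [this, ← Finset.mul_sum]
    have hcast : ((∑ i ∈ Finset.Icc 1 j, i : ℕ) : ℝ) = j * (j+1) / 2 := by
      rw [hsum]
      have h2 : 2 ∣ j * (j + 1) := (Nat.even_mul_succ_self j).two_dvd
      rw [Nat.cast_div h2 (by norm_num)]
      push_cast; ring
    rw [show (∑ i ∈ Finset.Icc 1 j, (i:ℝ)) = ((∑ i ∈ Finset.Icc 1 j, i : ℕ):ℝ) by push_cast; rfl, hcast]
    field_simp
  · have h2P : (2 * P : ℝ) = j * (j + 1) := by
      rw [hPdef]
      have h2 : 2 ∣ j * (j + 1) := (Nat.even_mul_succ_self j).two_dvd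
      push_cast [Nat.cast_div h2 (by norm_num : (2:ℝ) ≠ 0)]
      ring
    have hle : Real.sqrt (2 * P) ≤ (j:ℝ) + 1 := by
      rw [h2P]
      calc Real.sqrt ((j:ℝ) * (j + 1)) ≤ Real.sqrt (((j:ℝ)+1)^2) :=
            Real.sqrt_le_sqrt (by nlinarith)
        _ = (j:ℝ) + 1 := Real.sqrt_sq (by positivity)
    have := mul_le_mul_of_nonneg_left hle (by positivity : (0:ℝ) ≤ m / 2)
    linarith
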